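/- For every nonzero complex number x: the matrix g(x) is symmetric and invertible; A_0(x)ᵀ g(x) = g(x) A_0(x); A_∞ᵀ g(x) + g(x) A_∞ = n·g(x); and x·(d/dx) g(x) = Rᵀ g(x) + g(x) R (equivalently, the bilinear form S defined by g is flat for the connection with residue matrix R in the x-direction and A_0(x), A_∞ are respectively self-adjoint and satisfy A_∞ + A_∞* = n·Id with respect to g). -/

import Mathlib

open Finset Matrix

noncomputable section

/-- The matrix `A_0(x)`: `A_0(x)_{1,0} = μx`, `A_0(x)_{k+1,k} = μ` for `1 ≤ k ≤ μ−2`,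
`A_0(x)_{0,μ−1} = μ`, all other entries `0`. -/
def A0 (μ : ℕ) (x : ℂ) : Matrix (Fin μ) (Fin μ) ℂ :=
  Matrix.of fun i j =>
    if (i : ℕ) = (j : ℕ) + 1 then (if (j : ℕ) = 0 then (μ : ℂ) * x else (μ : ℂ))
    else if (i : ℕ) = 0 ∧ (j : ℕ) = μ - 1 then (μ : ℂ) else 0

/-- The diagonal matrix `A_∞ = diag(α_0, …, α_{μ−1})` with `α_k = k − s_k`. -/
def Ainf (μ : ℕ) (s : ℕ → ℚ) : Matrix (Fin μ) (Fin μ) ℂ :=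
  Matrix.diagonal fun k : Fin μ => ((k : ℕ) : ℂ) - ((s (k : ℕ) : ℚ) : ℂ)

/-- The diagonal matrix `R`: `R_{0,0} = 0`, `R_{k,k} = −1` for `1 ≤ k ≤ n`, and
`R_{k,k} = −s_{μ+n−k}/μ` for `n+1 ≤ k ≤ μ−1`. -/
def Rmat (μ n : ℕ) (s : ℕ → ℚ) : Matrix (Fin μ) (Fin μ) ℂ :=
  Matrix.diagonal fun k : Fin μ =>
    if (k : ℕ) = 0 then 0
    else if (k : ℕ) ≤ n then -1
    else -((s (μ + n - (k : ℕ)) : ℚ) : ℂ) / (μ : ℂ)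

/-- The symmetric matrix `g(x)`: `g(x)_{0,n} = g(x)_{n,0} = x⁻¹`, `g(x)_{k,n−k} = x⁻²`
for `1 ≤ k ≤ n−1`, `g(x)_{k,μ+n−k} = x⁻¹` for `n+1 ≤ k ≤ μ−1`, all other entries `0`. -/
def gmat (μ n : ℕ) (x : ℂ) : Matrix (Fin μ) (Fin μ) ℂ :=
  Matrix.of fun i j =>
    if (i : ℕ) + (j : ℕ) = n then
      (if (i : ℕ) = 0 ∨ (i : ℕ) = n then x⁻¹ else x⁻¹ ^ 2)
    else if (i : ℕ) + (j : ℕ) = μ + n then x⁻¹ else 0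

/-! ### Auxiliary lemmas -/

lemma monad_cast (s : Multiset ℕ) :
    ((do let a ← s; pure ((a : ℚ))) : Multiset ℚ) = s.map (fun a : ℕ => (a : ℚ)) :=
  Multiset.bind_singleton _ _

lemma range_reflect (m : ℕ) :
    (Multiset.range m).map (fun ℓ => m - 1 - ℓ) = Multiset.range m := by
  refine (Multiset.Nodup.ext ?_ (Multiset.nodup_range m)).mpr ?_
  · exact (Multiset.nodup_range m).map_on (by
      intro a ha b hb h
      simp only [Multiset.mem_range] at ha hb
      omega)
  · intro a
    simp only [Multiset.mem_map, Multiset.mem_range]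
    constructor
    · rintro ⟨b, hb, rfl⟩; omega
    · intro ha; exact ⟨m - 1 - a, by omega, by omega⟩

lemma range_bot (u : ℕ) :
    Multiset.range (u + 1) = 0 ::ₘ (Multiset.range u).map (· + 1) := by
  rw [← Multiset.coe_range, ← Multiset.coe_range, List.range_succ_eq_map]
  simp [Multiset.map_coe]

lemma lemA (v m : ℕ) (hv : 1 ≤ v) :
    (Multiset.range v).map (fun ℓ : ℕ => (ℓ : ℚ) * m / v) =
      (0 : ℚ) ::ₘ (Multiset.range (v - 1)).map (fun ℓ : ℕ => ((ℓ : ℚ) + 1) * m / v) := by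
  obtain ⟨u, rfl⟩ : ∃ u, v = u + 1 := ⟨v - 1, by omega⟩
  rw [range_bot, Multiset.map_cons, Multiset.map_map]
  simp only [Nat.add_sub_cancel]
  congr 1
  · push_cast; ring
  · apply Multiset.map_congr rfl
    intro ℓ hℓ
    simp only [Function.comp_apply]
    push_cast
    ring

lemma lemB (v m : ℕ) (hv : 1 ≤ v) :
    ((Multiset.range v).map (fun ℓ : ℕ => (ℓ : ℚ) * m / v)).map (fun t => (m : ℚ) - t) =
      (m : ℚ) ::ₘ (Multiset.range (v - 1)).map (fun ℓ : ℕ => ((ℓ : ℚ) + 1) * m / v) := by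
  obtain ⟨u, rfl⟩ : ∃ u, v = u + 1 := ⟨v - 1, by omega⟩
  rw [Multiset.map_map, range_bot, Multiset.map_cons, Multiset.map_map]
  simp only [Nat.add_sub_cancel]
  have hvQ : ((u : ℚ) + 1) ≠ 0 := by positivity
  congr 1
  · simp
  · conv_lhs => rw [← range_reflect u, Multiset.map_map]
    apply Multiset.map_congr rfl
    intro ℓ hℓ
    rw [Multiset.mem_range] at hℓ
    simp only [Function.comp_apply]
    have h2 : u - 1 - ℓ + 1 = u - ℓ := by omega
    have h1 : ((u - 1 - ℓ + 1 : ℕ) : ℚ) = (u : ℚ) - ℓ := by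
      rw [h2]
      push_cast [Nat.cast_sub (by omega : ℓ ≤ u)]
      ring
    push_cast [h1]
    field_simp
    ring

/-- entry value of `g` in the row determined by column `j` -/
def gval (n : ℕ) (x : ℂ) (j : ℕ) : ℂ :=
  if j = 0 ∨ j = n then x⁻¹ else if j ≤ n then x⁻¹ ^ 2 else x⁻¹

/-- the unique row index where column `j` of `g` is nonzero -/
def partner (μ n : ℕ) (h : n < μ) (j : Fin μ) : Fin μ :=
  ⟨if (j : ℕ) ≤ n then n - (j : ℕ) else μ + n - (j : ℕ), by
    have := j.isLt; split <;> omega⟩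

lemma partner_val {μ n : ℕ} (h : n < μ) (j : Fin μ) :
    ((partner μ n h j : Fin μ) : ℕ) =
      if (j : ℕ) ≤ n then n - (j : ℕ) else μ + n - (j : ℕ) := rfl

lemma partner_partner {μ n : ℕ} (h : n < μ) (j : Fin μ) :
    partner μ n h (partner μ n h j) = j := by
  have := j.isLt
  apply Fin.ext
  rw [partner_val, partner_val]
  split_ifs <;> omega

lemma gmat_apply {μ n : ℕ} (h : n < μ) (x : ℂ) (k j : Fin μ) :
    gmat μ n x k j = if k = partner μ n h j then gval n x j else 0 := by
  have hk := k.isLt; have hj := j.isLt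
  simp only [gmat, Matrix.of_apply, gval, Fin.ext_iff, partner_val]
  split_ifs <;> first | rfl | (exfalso; omega)

lemma gmat_apply' {μ n : ℕ} (h : n < μ) (x : ℂ) (j k : Fin μ) :
    gmat μ n x j k = if k = partner μ n h j then gval n x j else 0 := by
  have hk := k.isLt; have hj := j.isLt
  simp only [gmat, Matrix.of_apply, gval, Fin.ext_iff, partner_val]
  split_ifs <;> first | rfl | (exfalso; omega)

lemma gmat_mul {μ n : ℕ} (h : n < μ) (x : ℂ) (B : Matrix (Fin μ) (Fin μ) ℂ) (i j : Fin μ) :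
    (gmat μ n x * B) i j = gval n x i * B (partner μ n h i) j := by
  rw [Matrix.mul_apply]
  rw [Finset.sum_congr rfl (fun k _ => by rw [gmat_apply' h x i k])]
  simp only [ite_mul, zero_mul, Finset.sum_ite_eq', Finset.mem_univ, if_true]

lemma mul_gmat {μ n : ℕ} (h : n < μ) (x : ℂ) (B : Matrix (Fin μ) (Fin μ) ℂ) (i j : Fin μ) :
    (B * gmat μ n x) i j = B i (partner μ n h j) * gval n x j := by
  rw [Matrix.mul_apply]
  rw [Finset.sum_congr rfl (fun k _ => by rw [gmat_apply h x k j])]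
  simp only [mul_ite, mul_zero, Finset.sum_ite_eq', Finset.mem_univ, if_true]

set_option maxHeartbeats 2000000 in
/-- for every `x ≠ 0`, `g(x)` is symmetric and invertible, `A_0(x)` is
self-adjoint for `g(x)`, `A_∞ + A_∞^* = n·Id` with respect to `g(x)`, and
`x·(d/dx)g(x) = Rᵀ g(x) + g(x) R`. -/
theorem stmt_2 (n : ℕ) (hn : 1 ≤ n) (w : ℕ → ℕ) (hw0 : w 0 = 1)
    (hwpos : ∀ i ∈ Finset.Icc 1 n, 1 ≤ w i)
    (μ : ℕ) (hμ : μ = 1 + ∑ i ∈ Finset.Icc 1 n, w i)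
    (s : ℕ → ℚ) (hmono : ∀ k, k + 1 < μ → s k ≤ s (k + 1))
    (hmult : (Multiset.range μ).map s =
      (Finset.range (n + 1)).val.bind fun i =>
        (Multiset.range (w i)).map fun ℓ => (ℓ : ℚ) * μ / (w i))
    (x : ℂ) (hx : x ≠ 0) :
    (gmat μ n x)ᵀ = gmat μ n x ∧
    IsUnit (gmat μ n x) ∧
    (A0 μ x)ᵀ * gmat μ n x = gmat μ n x * A0 μ x ∧
    (Ainf μ s)ᵀ * gmat μ n x + gmat μ n x * Ainf μ s = (n : ℂ) • gmat μ n x ∧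
    (∀ i j : Fin μ, HasDerivAt (fun y : ℂ => gmat μ n y i j)
      (x⁻¹ * (((Rmat μ n s)ᵀ * gmat μ n x + gmat μ n x * Rmat μ n s) i j)) x) := by
  simp only [monad_cast, Multiset.map_map, Function.comp_def] at hmult
  -- basic numeric facts
  have hnμ : n < μ := by
    have h1 : n ≤ ∑ i ∈ Finset.Icc 1 n, w i := by
      calc n = ∑ _i ∈ Finset.Icc 1 n, 1 := by simp
        _ ≤ ∑ i ∈ Finset.Icc 1 n, w i := Finset.sum_le_sum hwpos
    omega
  have hμ0 : 0 < μ := by omega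
  have hμQ : (μ : ℚ) ≠ 0 := Nat.cast_ne_zero.mpr (by omega)
  have hwn : ∀ i, i ≤ n → 1 ≤ w i := by
    intro i hi
    rcases Nat.eq_zero_or_pos i with rfl | hp
    · omega
    · exact hwpos i (Finset.mem_Icc.mpr ⟨hp, hi⟩)
  -- global monotonicity
  have hmono' : ∀ k, k < μ → ∀ j, j ≤ k → s j ≤ s k := by
    intro k
    induction k with
    | zero =>
      intro _ j hj
      have hj0 : j = 0 := by omega
      exact le_of_eq (congrArg s hj0)
    | succ m ih =>
      intro hk j hj
      by_cases hjm : j ≤ m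
      · exact (ih (by omega) j hjm).trans (hmono m hk)
      · have hjm' : j = m + 1 := by omega
        exact le_of_eq (congrArg s hjm')
  -- nonnegativity
  have hnonneg : ∀ k, k < μ → 0 ≤ s k := by
    intro k hk
    have hmem : s k ∈ (Multiset.range μ).map s :=
      Multiset.mem_map_of_mem _ (Multiset.mem_range.mpr hk)
    rw [hmult] at hmem
    obtain ⟨i, hi, hmem2⟩ := Multiset.mem_bind.mp hmem
    obtain ⟨ℓ, hℓ, heq⟩ := Multiset.mem_map.mp hmem2
    rw [← heq]
    positivity
  -- decomposition of the multiset
  have hT : (Multiset.range μ).map s =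
      Multiset.replicate (n + 1) (0 : ℚ) +
        (Finset.range (n + 1)).val.bind
          (fun i => (Multiset.range (w i - 1)).map fun ℓ : ℕ => ((ℓ : ℚ) + 1) * μ / (w i)) := by
    rw [hmult]
    rw [Multiset.bind_congr (fun i hi => lemA (w i) μ (hwn i (by
      rw [Finset.range_val, Multiset.mem_range] at hi; omega)))]
    simp_rw [← Multiset.singleton_add]
    rw [Multiset.bind_add, Multiset.bind_singleton]
    congr 1
    rw [Multiset.map_const']
    simp
  have hT' : ((Multiset.range μ).map s).map (fun t => (μ : ℚ) - t) =
      Multiset.replicate (n + 1) ((μ : ℕ) : ℚ) +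
        (Finset.range (n + 1)).val.bind
          (fun i => (Multiset.range (w i - 1)).map fun ℓ : ℕ => ((ℓ : ℚ) + 1) * μ / (w i)) := by
    rw [hmult, Multiset.map_bind]
    rw [Multiset.bind_congr (fun i hi => lemB (w i) μ (hwn i (by
      rw [Finset.range_val, Multiset.mem_range] at hi; omega)))]
    simp_rw [← Multiset.singleton_add]
    rw [Multiset.bind_add, Multiset.bind_singleton]
    congr 1
    rw [Multiset.map_const']
    simp
  -- the second summand contains no zeros
  have hQ0 : Multiset.count (0 : ℚ)
      ((Finset.range (n + 1)).val.bind
        (fun i => (Multiset.range (w i - 1)).map fun ℓ : ℕ => ((ℓ : ℚ) + 1) * μ / (w i))) = 0 := by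
    rw [Multiset.count_eq_zero]
    intro hmem
    obtain ⟨i, hi, hmem2⟩ := Multiset.mem_bind.mp hmem
    obtain ⟨ℓ, hℓ, heq⟩ := Multiset.mem_map.mp hmem2
    have hwi : (0 : ℚ) < w i := by
      have := hwn i (by rw [Finset.range_val, Multiset.mem_range] at hi; omega)
      exact_mod_cast Nat.lt_of_lt_of_le Nat.zero_lt_one this
    have hμQ' : (0 : ℚ) < μ := by exact_mod_cast hμ0
    have hℓQ : (0 : ℚ) < (ℓ : ℚ) + 1 := by positivity
    have : (0 : ℚ) < ((ℓ : ℚ) + 1) * μ / (w i) := div_pos (mul_pos hℓQ hμQ') hwi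
    rw [heq] at this
    exact lt_irrefl _ this
  -- s vanishes on [0, n]
  have hs0 : ∀ k, k ≤ n → s k = 0 := by
    suffices hsn : s n = 0 by
      intro k hk
      have h1 : s k ≤ s n := hmono' n hnμ k hk
      have h2 : 0 ≤ s k := hnonneg k (by omega)
      linarith
    by_contra hne
    have hpos : ∀ k, n ≤ k → k < μ → ¬(0 = s k) := by
      intro k h1 h2 h0
      have h3 : s n ≤ s k := hmono' k h2 n h1
      have h4 : 0 ≤ s n := hnonneg n hnμ
      exact hne (le_antisymm (h0 ▸ h3) h4)
    have hcount1 : Multiset.count (0 : ℚ) ((Multiset.range μ).map s) = n + 1 := by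
      rw [hT, Multiset.count_add, Multiset.count_replicate, if_pos rfl, hQ0]
    have hcount2 : Multiset.count (0 : ℚ) ((Multiset.range μ).map s) ≤ n := by
      rw [Multiset.count_map]
      have hsub : Multiset.filter (fun a => 0 = s a) (Multiset.range μ) ≤ Multiset.range n := by
        rw [Multiset.le_iff_subset ((Multiset.nodup_range μ).filter _)]
        intro k hk
        rw [Multiset.mem_filter, Multiset.mem_range] at hk
        rw [Multiset.mem_range]
        by_contra hkn
        exact hpos k (by omega) hk.1 hk.2
      calc Multiset.card (Multiset.filter (fun a => 0 = s a) (Multiset.range μ))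
          ≤ Multiset.card (Multiset.range n) := Multiset.card_le_card hsub
        _ = n := Multiset.card_range n
    omega
  -- sorted list comparison, giving the symmetry s i + s (μ+n-i) = μ
  have hF2 : ∀ i, n + 1 ≤ i → i < μ → s i + s (μ + n - i) = μ := by
    have hL1 : (((List.range (μ - (n + 1))).map (fun k => s ((n + 1) + k)) : List ℚ) : Multiset ℚ) =
        (Finset.range (n + 1)).val.bind
          (fun i => (Multiset.range (w i - 1)).map fun ℓ : ℕ => ((ℓ : ℚ) + 1) * μ / (w i)) := by
      have hsplit : (Multiset.range μ).map s =
          Multiset.replicate (n + 1) (0 : ℚ) +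
            ↑((List.range (μ - (n + 1))).map (fun k => s ((n + 1) + k))) := by
        have h1 : List.range μ = List.range (n + 1) ++
            (List.range (μ - (n + 1))).map ((n + 1) + ·) := by
          conv_lhs => rw [show μ = (n + 1) + (μ - (n + 1)) by omega]
          exact List.range_add
        have hrep : (List.range (n + 1)).map s = List.replicate (n + 1) (0 : ℚ) := by
          apply List.eq_replicate_iff.mpr
          refine ⟨by simp, ?_⟩
          intro b hb
          obtain ⟨k, hk, rfl⟩ := List.mem_map.mp hb
          rw [List.mem_range] at hk
          exact hs0 k (by omega)
        rw [← Multiset.coe_range, Multiset.map_coe, h1]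
        simp only [List.map_append, List.map_map, ← Multiset.coe_add]
        rw [hrep]
        rfl
      have h2 := hT
      rw [hsplit] at h2
      exact add_left_cancel h2
    have hL2 : (((List.range (μ - (n + 1))).map
          (fun k => (μ : ℚ) - s (μ - 1 - k)) : List ℚ) : Multiset ℚ) =
        (Finset.range (n + 1)).val.bind
          (fun i => (Multiset.range (w i - 1)).map fun ℓ : ℕ => ((ℓ : ℚ) + 1) * μ / (w i)) := by
      have hsplit : ((Multiset.range μ).map s).map (fun t => (μ : ℚ) - t) =
          ↑((List.range (μ - (n + 1))).map (fun k => (μ : ℚ) - s (μ - 1 - k))) +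
            Multiset.replicate (n + 1) ((μ : ℕ) : ℚ) := by
        rw [Multiset.map_map]
        rw [← range_reflect μ, Multiset.map_map]
        have h1 : List.range μ = List.range (μ - (n + 1)) ++
            (List.range (n + 1)).map ((μ - (n + 1)) + ·) := by
          conv_lhs => rw [show μ = (μ - (n + 1)) + (n + 1) by omega]
          exact List.range_add
        have hrep : (List.range (n + 1)).map
            (fun k => (μ : ℚ) - s (μ - 1 - (μ - (n + 1) + k))) =
            List.replicate (n + 1) ((μ : ℕ) : ℚ) := by
          apply List.eq_replicate_iff.mpr
          refine ⟨by simp, ?_⟩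
          intro b hb
          obtain ⟨k, hk, rfl⟩ := List.mem_map.mp hb
          rw [List.mem_range] at hk
          rw [hs0 (μ - 1 - (μ - (n + 1) + k)) (by omega)]
          ring
        rw [← Multiset.coe_range, Multiset.map_coe, h1]
        simp only [List.map_append, List.map_map, ← Multiset.coe_add]
        rw [show (List.range (n + 1)).map
            ((((fun t => (μ : ℚ) - t) ∘ s) ∘ fun ℓ => μ - 1 - ℓ) ∘ (fun x => μ - (n + 1) + x)) =
            List.replicate (n + 1) ((μ : ℕ) : ℚ) from hrep]
        rfl
      have h2 := hT'
      rw [hsplit] at h2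
      rw [add_comm] at h2
      exact (add_left_cancel h2.symm).symm
    have hperm : ((List.range (μ - (n + 1))).map (fun k => s ((n + 1) + k))).Perm
        ((List.range (μ - (n + 1))).map (fun k => (μ : ℚ) - s (μ - 1 - k))) :=
      Multiset.coe_eq_coe.mp (hL1.trans hL2.symm)
    have hsorted1 : ((List.range (μ - (n + 1))).map (fun k => s ((n + 1) + k))).SortedLE := by
      rw [List.sortedLE_iff_pairwise, List.pairwise_map]
      refine List.pairwise_lt_range.imp_of_mem ?_
      intro a b ha hb hab
      rw [List.mem_range] at ha hb
      exact hmono' ((n + 1) + b) (by omega) ((n + 1) + a) (by omega)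
    have hsorted2 : ((List.range (μ - (n + 1))).map
        (fun k => (μ : ℚ) - s (μ - 1 - k))).SortedLE := by
      rw [List.sortedLE_iff_pairwise, List.pairwise_map]
      refine List.pairwise_lt_range.imp_of_mem ?_
      intro a b ha hb hab
      rw [List.mem_range] at ha hb
      have : s (μ - 1 - b) ≤ s (μ - 1 - a) :=
        hmono' (μ - 1 - a) (by omega) (μ - 1 - b) (by omega)
      linarith
    have heqL := List.Perm.eq_of_sortedLE hsorted1 hsorted2 hperm
    intro i h1 h2
    have hk : i - (n + 1) < μ - (n + 1) := by omega
    have hlen : i - (n + 1) <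
        ((List.range (μ - (n + 1))).map (fun k => s ((n + 1) + k))).length := by
      simpa using hk
    have hlen2 : i - (n + 1) < ((List.range (μ - (n + 1))).map
        (fun k => (μ : ℚ) - s (μ - 1 - k))).length := by simpa using hk
    have e1 : ((List.range (μ - (n + 1))).map (fun k => s ((n + 1) + k)))[i - (n + 1)]'hlen
        = s i := by
      rw [List.getElem_map, List.getElem_range]
      congr 1
      omega
    have e2 : ((List.range (μ - (n + 1))).map
        (fun k => (μ : ℚ) - s (μ - 1 - k)))[i - (n + 1)]'hlen2 = (μ : ℚ) - s (μ + n - i) := by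
      rw [List.getElem_map, List.getElem_range]
      congr 2
      omega
    simp only [heqL] at e1
    have e3 : s i = (μ : ℚ) - s (μ + n - i) := e1.symm.trans e2
    linarith [e3]
  -- Now the matrix statements.
  refine ⟨?_, ?_, ?_, ?_, ?_⟩
  · -- symmetry
    ext i j
    have hi := i.isLt; have hj := j.isLt
    simp only [Matrix.transpose_apply, gmat, Matrix.of_apply]
    split_ifs <;> first | rfl | (exfalso; omega)
  · -- invertibility
    have key : gmat μ n x * gmat μ n x⁻¹ = 1 := by
      ext i j
      rw [gmat_mul hnμ, gmat_apply hnμ, Matrix.one_apply]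
      by_cases hij : i = j
      · subst hij
        rw [if_pos rfl, if_pos rfl]
        have hi := i.isLt
        simp only [gval]
        split_ifs with h1 h2
        · rw [inv_inv]
          exact inv_mul_cancel₀ hx
        · rw [inv_inv]
          have h3 : x⁻¹ ^ 2 * x ^ 2 = (x⁻¹ * x) ^ 2 := by ring
          rw [h3, inv_mul_cancel₀ hx, one_pow]
        · rw [inv_inv]
          exact inv_mul_cancel₀ hx
      · have hne : partner μ n hnμ i ≠ partner μ n hnμ j := by
          intro hc
          exact hij (by rw [← partner_partner hnμ i, hc, partner_partner hnμ j])
        rw [if_neg hne, if_neg hij, mul_zero]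
    exact (Matrix.isUnit_iff_isUnit_det _).mpr (Matrix.isUnit_det_of_right_inverse key)
  · -- A0 self-adjointness
    ext i j
    rw [mul_gmat hnμ, gmat_mul hnμ, Matrix.transpose_apply]
    have hi := i.isLt; have hj := j.isLt
    by_cases hjn : (j : ℕ) ≤ n <;> by_cases hin : (i : ℕ) ≤ n <;>
      simp only [A0, Matrix.of_apply, gval, partner_val, hjn, hin, if_true, if_false,
        ite_true, ite_false]
    all_goals split_ifs
    all_goals try rfl
    all_goals try (exfalso; omega)
    all_goals (field_simp; try ring)
  · -- Ainf statement
    rw [Ainf, Matrix.diagonal_transpose]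
    ext i j
    rw [Matrix.add_apply, Matrix.diagonal_mul, Matrix.mul_diagonal, Matrix.smul_apply,
      smul_eq_mul]
    have hi := i.isLt; have hj := j.isLt
    simp only [gmat, Matrix.of_apply]
    by_cases h1 : (i : ℕ) + (j : ℕ) = n
    · rw [if_pos h1]
      have hsi : s (i : ℕ) = 0 := hs0 _ (by omega)
      have hsj : s (j : ℕ) = 0 := hs0 _ (by omega)
      rw [hsi, hsj]
      have hcast : (((i : ℕ) : ℂ)) + ((j : ℕ) : ℂ) = (n : ℂ) := by
        rw [← Nat.cast_add, h1]
      push_cast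
      linear_combination (if (i : ℕ) = 0 ∨ (i : ℕ) = n then x⁻¹ else x⁻¹ ^ 2) * hcast
    · by_cases h2 : (i : ℕ) + (j : ℕ) = μ + n
      · rw [if_neg h1, if_pos h2]
        have hin : n + 1 ≤ (i : ℕ) := by omega
        have hsum := hF2 (i : ℕ) hin hi
        have hji : μ + n - (i : ℕ) = (j : ℕ) := by omega
        rw [hji] at hsum
        have hcast : ((s (i : ℕ) : ℚ) : ℂ) + ((s (j : ℕ) : ℚ) : ℂ) = (μ : ℂ) := by
          rw [← Rat.cast_add, hsum]
          push_cast
          ring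
        have hcast2 : (((i : ℕ) : ℂ)) + ((j : ℕ) : ℂ) = (μ : ℂ) + (n : ℂ) := by
          rw [← Nat.cast_add, h2]
          push_cast
          ring
        linear_combination (hcast2 - hcast) * x⁻¹
      · rw [if_neg h1, if_neg h2]
        ring
  · -- derivative statement
    intro i j
    have hi := i.isLt; have hj := j.isLt
    have hder₁ : HasDerivAt (fun y : ℂ => y⁻¹) (-(x ^ 2)⁻¹) x := hasDerivAt_inv hx
    simp only [Rmat, Matrix.diagonal_transpose, Matrix.add_apply, Matrix.diagonal_mul,
      Matrix.mul_diagonal, gmat, Matrix.of_apply]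
    by_cases h1 : (i : ℕ) + (j : ℕ) = n
    · simp only [if_pos h1]
      by_cases h2 : (i : ℕ) = 0 ∨ (i : ℕ) = n
      · simp only [if_pos h2]
        convert hder₁ using 1
        rcases h2 with h2 | h2
        · have hj' : (j : ℕ) = n := by omega
          rw [if_pos h2, hj', if_neg (by omega : ¬ n = 0), if_pos le_rfl]
          field_simp
          ring
        · have hj' : (j : ℕ) = 0 := by omega
          rw [if_neg (by omega : ¬ (i : ℕ) = 0), if_pos (by omega : (i : ℕ) ≤ n), hj',
            if_pos rfl]
          field_simp
          ring
      · simp only [if_neg h2]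
        have hi0 : ¬ (i : ℕ) = 0 := by omega
        have hin : (i : ℕ) ≤ n := by omega
        have hj0 : ¬ (j : ℕ) = 0 := by omega
        have hjn : (j : ℕ) ≤ n := by omega
        have hder₂ : HasDerivAt (fun y : ℂ => y⁻¹ ^ 2)
            ((2 : ℕ) * x⁻¹ ^ 1 * (-(x ^ 2)⁻¹)) x := hder₁.pow 2
        convert hder₂ using 1
        rw [if_neg hi0, if_pos hin, if_neg hj0, if_pos hjn]
        field_simp
        ring
    · by_cases h2 : (i : ℕ) + (j : ℕ) = μ + n
      · simp only [if_neg h1, if_pos h2]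
        have hin : n + 1 ≤ (i : ℕ) := by omega
        have hjn : n + 1 ≤ (j : ℕ) := by omega
        have hsum := hF2 (i : ℕ) hin hi
        have hji : μ + n - (i : ℕ) = (j : ℕ) := by omega
        have hij' : μ + n - (j : ℕ) = (i : ℕ) := by omega
        rw [hji] at hsum
        convert hder₁ using 1
        rw [if_neg (by omega : ¬ (i : ℕ) = 0), if_neg (by omega : ¬ (i : ℕ) ≤ n),
          if_neg (by omega : ¬ (j : ℕ) = 0), if_neg (by omega : ¬ (j : ℕ) ≤ n)]
        rw [hji, hij']
        have hcast : ((s (i : ℕ) : ℚ) : ℂ) + ((s (j : ℕ) : ℚ) : ℂ) = (μ : ℂ) := by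
          rw [← Rat.cast_add, hsum]
          push_cast
          ring
        have hμC : (μ : ℂ) ≠ 0 := Nat.cast_ne_zero.mpr (by omega)
        rw [show ((s (i : ℕ) : ℚ) : ℂ) = (μ : ℂ) - ((s (j : ℕ) : ℚ) : ℂ) by
          linear_combination hcast]
        field_simp
        ring
      · simp only [if_neg h1, if_neg h2, mul_zero, zero_mul, add_zero]
        simpa using hasDerivAt_const x (0 : ℂ)
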